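/- A square matrix $A$ over a field $F$ is invertible if and only if its complete inverse $A_c$ is invertible; and in that case $A_c = A^{-1}$. -/

import Mathlib

theorem matrix_invertible_iff_complete_invertible {F : Type*} [Field F] {m : ℕ}
    (A Ac : Matrix (Fin m) (Fin m) F) (p : ℕ) (hp : 0 < p)
    (h1 : A ^ p * Ac * A = A ^ p) (h4 : Ac * A * Ac - A * Ac * A = Ac - A)
    (h5 : A * Ac = Ac * A) :
    (IsUnit A ↔ IsUnit Ac) ∧ (IsUnit A → Ac = A⁻¹) := by
  -- Forward direction: if A is a unit then Ac * A = 1 and Ac = A⁻¹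
  have fwd : IsUnit A → Ac * A = 1 := by
    intro hA
    have hdet : IsUnit A.det := (Matrix.isUnit_iff_isUnit_det A).mp hA
    have hdetp : IsUnit (A ^ p).det := by
      rw [Matrix.det_pow]; exact hdet.pow p
    have hinv : (A ^ p)⁻¹ * (A ^ p) = 1 := Matrix.nonsing_inv_mul _ hdetp
    calc Ac * A = 1 * (Ac * A) := by rw [one_mul]
      _ = (A ^ p)⁻¹ * (A ^ p) * (Ac * A) := by rw [hinv]
      _ = (A ^ p)⁻¹ * (A ^ p * Ac * A) := by noncomm_ring
      _ = (A ^ p)⁻¹ * (A ^ p) := by rw [h1]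
      _ = 1 := hinv
  have fwd2 : IsUnit A → Ac = A⁻¹ := fun hA =>
    (Matrix.inv_eq_left_inv (fwd hA)).symm
  constructor
  · constructor
    · intro hA
      have h := fwd hA
      have : IsUnit Ac.det := IsUnit.of_mul_eq_one A.det
        (by rw [← Matrix.det_mul, h, Matrix.det_one])
      exact (Matrix.isUnit_iff_isUnit_det Ac).mpr this
    · intro hAc
      -- Ac is a unit; show A is a unit
      have hdet : IsUnit Ac.det := (Matrix.isUnit_iff_isUnit_det Ac).mp hAc
      have hinv : Ac⁻¹ * Ac = 1 := Matrix.nonsing_inv_mul _ hdet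
      have hinv' : Ac * Ac⁻¹ = 1 := Matrix.mul_nonsing_inv _ hdet
      set X := A * Ac - 1 with hX
      -- key identity: (Ac - A) * X = 0
      have hAAAc : A * A * Ac = A * Ac * A := by
        calc A * A * Ac = A * (A * Ac) := mul_assoc _ _ _
          _ = A * (Ac * A) := by rw [h5]
          _ = A * Ac * A := (mul_assoc _ _ _).symm
      have key : (Ac - A) * X = 0 := by
        have : Ac * (A * Ac) - Ac - (A * (A * Ac) - A) = 0 := by
          rw [← mul_assoc, ← mul_assoc, hAAAc]
          rw [sub_sub_sub_comm, h4]
          abel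
        calc (Ac - A) * X = Ac * (A * Ac) - Ac - (A * (A * Ac) - A) := by
              rw [hX]; noncomm_ring
          _ = 0 := this
      have hstep : X = Ac⁻¹ * A * X := by
        have h' : Ac * X = A * X := by
          have hz : Ac * X - A * X = 0 := by rw [← sub_mul]; exact key
          exact sub_eq_zero.mp hz
        calc X = (Ac⁻¹ * Ac) * X := by rw [hinv, one_mul]
          _ = Ac⁻¹ * (Ac * X) := by rw [mul_assoc]
          _ = Ac⁻¹ * (A * X) := by rw [h']
          _ = Ac⁻¹ * A * X := by rw [mul_assoc]
      have hiter : ∀ k : ℕ, X = (Ac⁻¹ * A) ^ k * X := by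
        intro k
        induction k with
        | zero => simp
        | succ n ih =>
          calc X = (Ac⁻¹ * A) ^ n * X := ih
            _ = (Ac⁻¹ * A) ^ n * ((Ac⁻¹ * A) * X) := by rw [← hstep]
            _ = (Ac⁻¹ * A) ^ (n + 1) * X := by rw [pow_succ]; noncomm_ring
      have hcomm : Commute Ac⁻¹ A := by
        unfold Commute SemiconjBy
        calc Ac⁻¹ * A = Ac⁻¹ * A * (Ac * Ac⁻¹) := by rw [hinv', mul_one]
          _ = Ac⁻¹ * (A * Ac) * Ac⁻¹ := by noncomm_ring
          _ = Ac⁻¹ * (Ac * A) * Ac⁻¹ := by rw [h5]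
          _ = (Ac⁻¹ * Ac) * (A * Ac⁻¹) := by noncomm_ring
          _ = A * Ac⁻¹ := by rw [hinv, one_mul]
      have hApX : A ^ p * X = 0 := by
        have : A ^ p * (A * Ac) = A ^ p := by
          rw [h5, ← mul_assoc, h1]
        rw [hX, mul_sub, mul_one, this, sub_self]
      have hXzero : X = 0 := by
        calc X = (Ac⁻¹ * A) ^ p * X := hiter p
          _ = (Ac⁻¹) ^ p * A ^ p * X := by rw [hcomm.mul_pow]
          _ = (Ac⁻¹) ^ p * (A ^ p * X) := by rw [mul_assoc]
          _ = 0 := by rw [hApX, mul_zero]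
      have hAAc : A * Ac = 1 := by
        have := sub_eq_zero.mp hXzero
        exact this
      have : IsUnit A.det := IsUnit.of_mul_eq_one Ac.det
        (by rw [← Matrix.det_mul, hAAc, Matrix.det_one])
      exact (Matrix.isUnit_iff_isUnit_det A).mpr this
  · exact fwd2
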